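/- Every multiplicative linear functional h on the Banach algebra (L¹(ℝ), ⋆_A) is of the form h(f) = η̄_A(ω₀) 𝓕_A(f)(ω₀) for some ω₀ ∈ ℝ, where η_A(ω) = e^{(πi/b)(dω² + 2(bq−dp)ω)}. -/

import Mathlib

open MeasureTheory Complex intervalIntegral


noncomputable def myconv (f g : ℝ → ℂ) (x : ℝ) : ℂ := ∫ s : ℝ, f s * g (x - s)

lemma myconv_eq (f g : ℝ → ℂ) :
    myconv f g = convolution f g (ContinuousLinearMap.mul ℝ ℂ) volume := rfl

lemma myconv_integrable {f g : ℝ → ℂ} (hf : Integrable f) (hg : Integrable g) :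
    Integrable (myconv f g) := by
  rw [myconv_eq]
  exact Integrable.integrable_convolution (ContinuousLinearMap.mul ℝ ℂ) hf hg

lemma myconv_prod_integrable {f g : ℝ → ℂ} (hf : Integrable f) (hg : Integrable g) :
    Integrable (fun p : ℝ × ℝ => f p.2 * g (p.1 - p.2)) (volume.prod volume) :=
  Integrable.convolution_integrand (ContinuousLinearMap.mul ℝ ℂ) hf hg

-- translation
lemma translate_integrable {g : ℝ → ℂ} (hg : Integrable g) (t : ℝ) :
    Integrable (fun x => g (x - t)) := hg.comp_sub_right t

noncomputable def Tt (t : ℝ) (F : ℝ →₁[volume] ℂ) : ℝ →₁[volume] ℂ :=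
  Lp.compMeasurePreserving (fun x => x - t) (measurePreserving_sub_right volume t) F

lemma Lp_ext {F G : ℝ →₁[volume] ℂ} (h : ⇑F =ᵐ[volume] ⇑G) : F = G := by
  exact Subtype.ext (MeasureTheory.AEEqFun.ext h)

lemma Tt_toL1 {g : ℝ → ℂ} (hg : Integrable g) (t : ℝ) :
    Tt t (hg.toL1 g) = (translate_integrable hg t).toL1 _ := by
  apply Lp_ext
  refine (Lp.coeFn_compMeasurePreserving _ _).trans ?_
  refine .trans ?_ (Integrable.coeFn_toL1 _).symm
  exact (measurePreserving_sub_right volume t).quasiMeasurePreserving.ae_eq_comp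
    (hg.coeFn_toL1)

lemma Tt_continuous (F : ℝ →₁[volume] ℂ) : Continuous fun t => Tt t F := by
  have : Continuous fun t : ℝ => (⟨fun x => x - t, by continuity⟩ : C(ℝ, ℝ)) := by
    apply ContinuousMap.continuous_of_continuous_uncurry
    exact (continuous_snd.sub continuous_fst)
  exact Continuous.compMeasurePreservingLp continuous_const this
    (fun t => measurePreserving_sub_right volume t) (by norm_num)

lemma Tt_norm (t : ℝ) (F : ℝ →₁[volume] ℂ) : ‖Tt t F‖ = ‖F‖ :=
  Lp.norm_compMeasurePreserving _ _

-- a.e. invariance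
lemma h_ae_eq {h : (ℝ → ℂ) → ℂ}
    (hadd : ∀ f g : ℝ → ℂ, Integrable f → Integrable g → h (f + g) = h f + h g)
    {C : ℝ} (hC : ∀ f : ℝ → ℂ, Integrable f → ‖h f‖ ≤ C * (eLpNorm f 1 volume).toReal)
    {f g : ℝ → ℂ} (hf : Integrable f) (hg : Integrable g) (hfg : f =ᵐ[volume] g) :
    h f = h g := by
  have h1 : g + (f - g) = f := by ext x; simp
  have h2 : h f = h g + h (f - g) := by
    conv_lhs => rw [← h1]
    exact hadd g (f - g) hg (hf.sub hg)
  have h3 : eLpNorm (f - g) 1 volume = 0 := by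
    rw [eLpNorm_congr_ae (show f - g =ᵐ[volume] 0 by
      filter_upwards [hfg] with x hx; simp [hx])]
    simp
  have h4 : ‖h (f - g)‖ ≤ 0 := by
    have := hC (f - g) (hf.sub hg); rw [h3] at this; simpa using this
  have h5 : h (f - g) = 0 := norm_le_zero_iff.mp (by simpa using h4)
  rw [h2, h5, add_zero]

lemma exists_CLM {h : (ℝ → ℂ) → ℂ}
    (hadd : ∀ f g : ℝ → ℂ, Integrable f → Integrable g → h (f + g) = h f + h g)
    (hsmul : ∀ (z : ℂ) (f : ℝ → ℂ), Integrable f → h (z • f) = z * h f)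
    {C : ℝ} (hC : ∀ f : ℝ → ℂ, Integrable f → ‖h f‖ ≤ C * (eLpNorm f 1 volume).toReal) :
    ∃ K : (ℝ →₁[volume] ℂ) →L[ℂ] ℂ, ∀ (f : ℝ → ℂ) (hf : Integrable f), K (hf.toL1 f) = h f := by
  have hint : ∀ F : ℝ →₁[volume] ℂ, Integrable (⇑F) volume := fun F => L1.integrable_coeFn F
  refine ⟨LinearMap.mkContinuous
    { toFun := fun F => h ⇑F
      map_add' := fun F G => by
        show h ⇑(F + G) = h ⇑F + h ⇑G
        rw [show h ⇑(F + G) = h (⇑F + ⇑G) from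
          h_ae_eq hadd hC (hint _) ((hint F).add (hint G)) (Lp.coeFn_add F G)]
        exact hadd _ _ (hint F) (hint G)
      map_smul' := fun z F => by
        show h ⇑(z • F) = z * h ⇑F
        rw [show h ⇑(z • F) = h (z • ⇑F) from
          h_ae_eq hadd hC (hint _) ((hint F).smul z) (Lp.coeFn_smul z F)]
        exact hsmul z _ (hint F) } C (fun F => by
          simpa [Lp.norm_def] using hC (⇑F) (hint F)), ?_⟩
  intro f hf
  exact h_ae_eq hadd hC (hint _) hf (hf.coeFn_toL1)

-- set-integral CLM
noncomputable def evSet (s : Set ℝ) : (ℝ →₁[volume] ℂ) →L[ℂ] ℂ :=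
  LinearMap.mkContinuous
    { toFun := fun F => ∫ x in s, F x
      map_add' := fun F G => by
        show (∫ x in s, (F + G) x) = (∫ x in s, F x) + (∫ x in s, G x)
        rw [integral_congr_ae (ae_restrict_of_ae (Lp.coeFn_add F G))]
        exact integral_add ((L1.integrable_coeFn F).integrableOn)
          ((L1.integrable_coeFn G).integrableOn)
      map_smul' := fun z F => by
        show (∫ x in s, (z • F) x) = z • (∫ x in s, F x)
        rw [integral_congr_ae (ae_restrict_of_ae (Lp.coeFn_smul z F))]
        exact integral_smul z _ } 1 (fun F => by
      rw [one_mul, Lp.norm_def]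
      refine (MeasureTheory.norm_integral_le_integral_norm _).trans ?_
      rw [show (eLpNorm (⇑F) 1 volume).toReal = ∫ x, ‖F x‖ by
        rw [eLpNorm_one_eq_lintegral_enorm,
          integral_norm_eq_lintegral_enorm (Lp.aestronglyMeasurable F)]]
      exact setIntegral_le_integral (L1.integrable_coeFn F).norm
        (ae_of_all _ fun x => norm_nonneg _))

lemma evSet_apply (s : Set ℝ) (F : ℝ →₁[volume] ℂ) : evSet s F = ∫ x in s, F x := rfl

-- the key swap lemma
lemma key_swap (K : (ℝ →₁[volume] ℂ) →L[ℂ] ℂ) {f g : ℝ → ℂ}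
    (hf : Integrable f) (hg : Integrable g) :
    K ((myconv_integrable hf hg).toL1 _) = ∫ t, f t * K (Tt t (hg.toL1 g)) := by
  set G := hg.toL1 g with hG
  set Φ : ℝ → (ℝ →₁[volume] ℂ) := fun t => f t • Tt t G with hΦ
  have hΦm : AEStronglyMeasurable Φ volume :=
    hf.aestronglyMeasurable.smul (Tt_continuous G).aestronglyMeasurable
  have hΦi : Integrable Φ volume := by
    refine Integrable.mono' (hf.norm.mul_const ‖G‖) hΦm (ae_of_all _ fun t => ?_)
    simp [hΦ, norm_smul, Tt_norm]
  -- identify the Bochner integral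
  have hcoe : ∀ t, ⇑(Tt t G) =ᵐ[volume] fun x => g (x - t) := by
    intro t
    rw [Tt_toL1 hg t]
    exact Integrable.coeFn_toL1 _
  have hkey : (myconv_integrable hf hg).toL1 _ = ∫ t, Φ t := by
    apply Lp_ext
    refine ((myconv_integrable hf hg).coeFn_toL1).trans ?_
    apply ae_eq_of_forall_setIntegral_eq_of_sigmaFinite
    · exact fun s _ _ => (myconv_integrable hf hg).integrableOn
    · exact fun s _ _ => (L1.integrable_coeFn _).integrableOn
    intro s hs hμs
    -- LHS: Fubini
    have hprod : Integrable (fun p : ℝ × ℝ => f p.2 * g (p.1 - p.2))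
        ((volume.restrict s).prod volume) := by
      rw [Measure.restrict_prod_eq_prod_univ]
      exact (myconv_prod_integrable hf hg).restrict
    have lhs_eq : (∫ x in s, myconv f g x) = ∫ t, f t * ∫ x in s, g (x - t) := by
      rw [show (∫ x in s, myconv f g x) = ∫ x in s, ∫ t, f t * g (x - t) from rfl]
      rw [integral_integral_swap hprod]
      congr 1; ext t
      rw [MeasureTheory.integral_const_mul]
    -- RHS: CLM swap
    have rhs_eq : (∫ x in s, (∫ t, Φ t : ℝ →₁[volume] ℂ) x) = ∫ t, f t * ∫ x in s, g (x - t) := by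
      have h1 : (∫ x in s, (∫ t, Φ t : ℝ →₁[volume] ℂ) x) = evSet s (∫ t, Φ t) := rfl
      rw [h1, ← ContinuousLinearMap.integral_comp_comm _ hΦi]
      congr 1; ext t
      have h2 : evSet s (Φ t) = f t • evSet s (Tt t G) := by
        rw [hΦ]; simp
      rw [h2, evSet_apply]
      have h3 : (∫ x in s, (Tt t G) x) = ∫ x in s, g (x - t) :=
        integral_congr_ae (ae_restrict_of_ae (hcoe t))
      rw [h3, smul_eq_mul]
    rw [lhs_eq, ← rhs_eq]
  rw [hkey, ← ContinuousLinearMap.integral_comp_comm _ hΦi]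
  congr 1; ext t
  rw [hΦ]; simp


lemma char_form {χ : ℝ → ℂ} (hc : Continuous χ) (h0 : χ 0 = 1)
    (hm : ∀ s t : ℝ, χ (s + t) = χ s * χ t) {M : ℝ} (hM : ∀ t, ‖χ t‖ ≤ M) :
    ∃ θ : ℝ, ∀ t : ℝ, χ t = Complex.exp (θ * Complex.I * t) := by
  -- choose δ
  obtain ⟨δ, hδpos, hδ⟩ : ∃ δ > 0, ∀ t ∈ Set.uIoc (0:ℝ) δ, ‖χ t - 1‖ ≤ 1/2 := by
    have : ContinuousAt (fun t => χ t - 1) 0 := (hc.sub continuous_const).continuousAt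
    rcases Metric.continuousAt_iff.mp this (1/2) (by norm_num) with ⟨ε, hε, hball⟩
    refine ⟨ε/2, by linarith, fun t ht => ?_⟩
    rw [Set.uIoc_of_le (by linarith)] at ht
    have : dist t 0 < ε := by
      rw [Real.dist_eq, sub_zero, abs_of_pos ht.1]; linarith [ht.2]
    have := hball this
    rw [h0] at this
    simpa [dist_eq_norm] using this.le
  set c : ℂ := ∫ t in (0:ℝ)..δ, χ t with hc'
  have hcne : c ≠ 0 := by
    intro h
    have h1 : c - δ = ∫ t in (0:ℝ)..δ, (χ t - 1) := by
      rw [intervalIntegral.integral_sub (hc.intervalIntegrable _ _)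
        (intervalIntegrable_const)]
      simp [hc']
    have h2 : ‖c - δ‖ ≤ (1/2) * |δ - 0| :=
      h1 ▸ intervalIntegral.norm_integral_le_of_norm_le_const hδ
    rw [h] at h2
    simp only [zero_sub, norm_neg, sub_zero, Complex.norm_real, Real.norm_eq_abs,
      abs_of_pos hδpos] at h2
    linarith
  set F : ℝ → ℂ := fun x => ∫ t in (0:ℝ)..x, χ t with hF
  have hFd : ∀ x : ℝ, HasDerivAt F (χ x) x := fun x =>
    (hc.integral_hasStrictDerivAt 0 x).hasDerivAt
  have key : ∀ t : ℝ, χ t * c = F (δ + t) - F t := by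
    intro t
    have e1 : χ t * c = ∫ s in (0:ℝ)..δ, χ (s + t) := by
      rw [hc', ← intervalIntegral.integral_const_mul]
      congr 1; ext s
      rw [add_comm, hm t s]
    rw [e1, intervalIntegral.integral_comp_add_right (fun s => χ s) t]
    rw [zero_add]
    exact (intervalIntegral.integral_interval_sub_left
      (hc.intervalIntegrable _ _) (hc.intervalIntegrable _ _)).symm
  set w : ℂ := (χ δ - 1) * c⁻¹ with hw
  have hχd : ∀ t : ℝ, HasDerivAt χ (w * χ t) t := by
    intro t
    have h1 : HasDerivAt (fun t => (F (δ + t) - F t) * c⁻¹)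
        ((χ (δ + t) - χ t) * c⁻¹) t := by
      have hA : HasDerivAt (fun t : ℝ => F (δ + t)) (χ (δ + t)) t := by
        exact HasDerivAt.comp_const_add δ t (hFd (δ + t))
      exact ((hA.sub (hFd t)).mul_const _)
    have h2 : (fun t => (F (δ + t) - F t) * c⁻¹) = χ := by
      ext t; rw [← key t, mul_assoc, mul_inv_cancel₀ hcne, mul_one]
    rw [h2] at h1
    have h3 : (χ (δ + t) - χ t) * c⁻¹ = w * χ t := by
      rw [hm δ t, hw]; ring
    rwa [h3] at h1
  -- solve the ODE
  have hsol : ∀ t : ℝ, χ t = Complex.exp (w * t) := by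
    have hgd : ∀ t : ℝ, HasDerivAt (fun t : ℝ => χ t * Complex.exp (-(w * t))) 0 t := by
      intro t
      have he : HasDerivAt (fun t : ℝ => Complex.exp (-(w * t))) 
          (-(Complex.exp (-(w * t)) * w)) t := by
        have h1 : HasDerivAt (fun t : ℝ => -(w * t)) (-w) t := by
          have := ((hasDerivAt_id t).ofReal_comp.const_mul w).neg
          have h' : HasDerivAt (-fun y : ℝ => w * (y:ℂ)) (-w) t := by simpa using this
          exact h'
        simpa using h1.cexp
      have := (hχd t).mul he
      have e : w * χ t * Complex.exp (-(w * t)) + χ t * -(Complex.exp (-(w * t)) * w) = 0 := by ring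
      exact this.congr_deriv e
    have hconst : ∀ t : ℝ, χ t * Complex.exp (-(w * t)) = 1 := by
      intro t
      have := is_const_of_deriv_eq_zero (f := fun t : ℝ => χ t * Complex.exp (-(w * t)))
        (fun x => (hgd x).differentiableAt) (fun x => (hgd x).deriv) t 0
      simpa [h0] using this
    intro t
    have := hconst t
    have hee : Complex.exp (w * t) * Complex.exp (-(w * t)) = 1 := by
      rw [← Complex.exp_add]; simp
    calc χ t = (Complex.exp (w*t) * Complex.exp (-(w*t))) * χ t := by rw [hee, one_mul]
      _ = Complex.exp (w*t) * (χ t * Complex.exp (-(w*t))) := by ring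
      _ = Complex.exp (w*t) := by rw [this, mul_one]
  -- boundedness forces Re w = 0
  have hre : w.re = 0 := by
    by_contra hne
    have hM1 : (1:ℝ) ≤ M := by simpa [h0] using hM 0
    have hMpos : (0:ℝ) < M := by linarith
    have hbd : ∀ t : ℝ, w.re * t ≤ Real.log M := by
      intro t
      have h1 : ‖χ t‖ = Real.exp (w.re * t) := by
        rw [hsol t, Complex.norm_exp]
        congr 1
        simp [Complex.mul_re]
      have := hM t
      rw [h1] at this
      calc w.re * t = Real.log (Real.exp (w.re * t)) := (Real.log_exp _).symm
        _ ≤ Real.log M := Real.log_le_log (Real.exp_pos _) this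
    have := hbd ((Real.log M + 1) / w.re)
    rw [mul_div_cancel₀ _ hne] at this
    linarith
  refine ⟨w.im, fun t => ?_⟩
  rw [hsol t]
  congr 1
  apply Complex.ext <;>
    simp [Complex.mul_re, Complex.mul_im, hre]

lemma toL1_congr_fun {f g : ℝ → ℂ} (hf : Integrable f) (hg : Integrable g)
    (h : f = g) : hf.toL1 f = hg.toL1 g := by
  apply Lp_ext
  exact (hf.coeFn_toL1).trans (h ▸ (hg.coeFn_toL1).symm)

lemma myconv_translate {f g : ℝ → ℂ} (t : ℝ) :
    myconv (fun x => f (x - t)) g = myconv f (fun x => g (x - t)) := by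
  funext x
  show (∫ s : ℝ, f (s - t) * g (x - s)) = ∫ s : ℝ, f s * g (x - s - t)
  rw [← integral_add_right_eq_self (fun s => f (s - t) * g (x - s)) t]
  congr 1; funext s
  rw [add_sub_cancel_right]
  congr 2
  ring

lemma L1_char_rep (K : (ℝ →₁[volume] ℂ) →L[ℂ] ℂ)
    (hKmul : ∀ (f g : ℝ → ℂ) (hf : Integrable f) (hg : Integrable g),
      K ((myconv_integrable hf hg).toL1 (myconv f g)) = K (hf.toL1 f) * K (hg.toL1 g))
    (hKne : ∃ (u : ℝ → ℂ) (hu : Integrable u), K (hu.toL1 u) ≠ 0) :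
    ∃ θ : ℝ, ∀ (f : ℝ → ℂ) (hf : Integrable f),
      K (hf.toL1 f) = ∫ t : ℝ, f t * Complex.exp (θ * Complex.I * t) := by
  obtain ⟨u, hu, hKu⟩ := hKne
  set U := hu.toL1 u with hU
  set χ : ℝ → ℂ := fun t => K (Tt t U) / K U with hχ
  have hKU : K U ≠ 0 := hKu
  -- commutation identity
  have F2 : ∀ (f g : ℝ → ℂ) (hf : Integrable f) (hg : Integrable g) (t : ℝ),
      K (Tt t (hf.toL1 f)) * K (hg.toL1 g) = K (hf.toL1 f) * K (Tt t (hg.toL1 g)) := by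
    intro f g hf hg t
    have h1 := hKmul (fun x => f (x - t)) g (translate_integrable hf t) hg
    have h2 := hKmul f (fun x => g (x - t)) hf (translate_integrable hg t)
    rw [toL1_congr_fun (myconv_integrable (translate_integrable hf t) hg)
      (myconv_integrable hf (translate_integrable hg t)) (myconv_translate t), h2]
      at h1
    rw [Tt_toL1 hf t, Tt_toL1 hg t]
    exact h1.symm
  -- K (Tt t F) = χ t * K F for any integrable f
  have F3 : ∀ (f : ℝ → ℂ) (hf : Integrable f) (t : ℝ),
      K (Tt t (hf.toL1 f)) = χ t * K (hf.toL1 f) := by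
    intro f hf t
    have h5 := F2 f u hf hu t
    calc K (Tt t (hf.toL1 f)) = K (Tt t (hf.toL1 f)) * K (hu.toL1 u) / K (hu.toL1 u) := by
          exact (mul_div_cancel_right₀ _ hKu).symm
      _ = K (hf.toL1 f) * K (Tt t (hu.toL1 u)) / K (hu.toL1 u) := by rw [h5]
      _ = χ t * K (hf.toL1 f) := by rw [hχ]; ring
  -- χ is a character
  have χ0 : χ 0 = 1 := by
    have h6 : Tt 0 U = U := by
      rw [hU, Tt_toL1 hu 0]
      exact toL1_congr_fun _ _ (by funext x; rw [sub_zero])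
    rw [hχ]; simp only [h6]
    exact div_self hKu
  have χmul : ∀ s t : ℝ, χ (s + t) = χ s * χ t := by
    intro s t
    have e1 : Tt t (Tt s U) = Tt (s + t) U := by
      rw [hU, Tt_toL1 hu s, Tt_toL1 (translate_integrable hu s) t, Tt_toL1 hu (s + t)]
      exact toL1_congr_fun _ _ (by funext x; congr 1; ring)
    have e2 : K (Tt (s + t) U) = χ t * K (Tt s U) := by
      rw [← e1, hU, Tt_toL1 hu s]
      exact F3 _ (translate_integrable hu s) t
    have e3 : K (Tt s U) = χ s * K U := F3 u hu s
    show K (Tt (s + t) U) / K U = χ s * χ t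
    rw [e2, e3]
    field_simp
  have χcont : Continuous χ :=
    (K.continuous.comp (Tt_continuous U)).div_const _
  have χbdd : ∀ t, ‖χ t‖ ≤ ‖K‖ * ‖U‖ / ‖K U‖ := by
    intro t
    have hb : ‖K (Tt t U)‖ ≤ ‖K‖ * ‖U‖ := by
      calc ‖K (Tt t U)‖ ≤ ‖K‖ * ‖Tt t U‖ := K.le_opNorm _
        _ = ‖K‖ * ‖U‖ := by rw [Tt_norm]
    rw [hχ]
    simp only [norm_div]
    gcongr
  -- representation
  have hrep : ∀ (f : ℝ → ℂ) (hf : Integrable f),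
      K (hf.toL1 f) = ∫ t : ℝ, f t * χ t := by
    intro f hf
    have h1 := key_swap K hf hu
    have h2 := hKmul f u hf hu
    have h3 : ∀ t : ℝ, f t * K (Tt t (hu.toL1 u)) = (f t * χ t) • K (hu.toL1 u) := by
      intro t
      rw [F3 u hu t, smul_eq_mul]
      ring
    have h4 : K (hf.toL1 f) * K (hu.toL1 u) = (∫ t : ℝ, f t * χ t) * K (hu.toL1 u) := by
      rw [← h2, h1]
      calc (∫ t : ℝ, f t * K (Tt t (hu.toL1 u)))
          = ∫ t : ℝ, (f t * χ t) • K (hu.toL1 u) := by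
            congr 1; funext t; exact h3 t
        _ = (∫ t : ℝ, f t * χ t) • K (hu.toL1 u) := integral_smul_const _ _
        _ = (∫ t : ℝ, f t * χ t) * K (hu.toL1 u) := smul_eq_mul _ _
    exact mul_right_cancel₀ hKu h4
  obtain ⟨θ, hθ⟩ := char_form χcont χ0 χmul χbdd
  refine ⟨θ, fun f hf => ?_⟩
  rw [hrep f hf]
  congr 1; funext t; rw [hθ t]

noncomputable def SAFT (a b d p q : ℝ) (f : ℝ → ℂ) (ω : ℝ) : ℂ :=
  (1 / Real.sqrt |b|) *
    ∫ t : ℝ, f t *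
      Complex.exp ((Real.pi * Complex.I / b) *
        (a * t ^ 2 + 2 * p * t - 2 * ω * t + 2 * (b * q - d * p) * ω + d * ω ^ 2))

noncomputable def etaA (b d p q : ℝ) (ω : ℝ) : ℂ :=
  Complex.exp ((Real.pi * Complex.I / b) * (d * ω ^ 2 + 2 * (b * q - d * p) * ω))

noncomputable def convA (a b : ℝ) (f g : ℝ → ℂ) (x : ℝ) : ℂ :=
  (1 / Real.sqrt |b|) *
    ∫ s : ℝ, f s *
      (Complex.exp (-2 * Real.pi * Complex.I * (a / b) * s * (x - s)) * g (x - s))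

noncomputable def chF (a b : ℝ) (x : ℝ) : ℂ :=
  Complex.exp ((Real.pi * a * x ^ 2 / b : ℝ) * Complex.I)

noncomputable def chI (a b : ℝ) (x : ℝ) : ℂ :=
  Complex.exp (-((Real.pi * a * x ^ 2 / b : ℝ) * Complex.I))

lemma chI_mul_chF (a b : ℝ) (x : ℝ) : chI a b x * chF a b x = 1 := by
  rw [chI, chF, ← Complex.exp_add]; simp

lemma norm_chF (a b x : ℝ) : ‖chF a b x‖ = 1 := Complex.norm_exp_ofReal_mul_I _

lemma norm_chI (a b x : ℝ) : ‖chI a b x‖ = 1 := by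
  rw [chI, neg_mul_eq_neg_mul, ← Complex.ofReal_neg]
  exact Complex.norm_exp_ofReal_mul_I _

lemma cont_chF (a b : ℝ) : Continuous (chF a b) := by
  apply Complex.continuous_exp.comp
  continuity

lemma cont_chI (a b : ℝ) : Continuous (chI a b) := by
  apply Complex.continuous_exp.comp
  continuity

lemma unit_mul_integrable {c : ℝ → ℂ} (hc : Continuous c) (hn : ∀ x, ‖c x‖ = 1)
    {f : ℝ → ℂ} (hf : Integrable f) : Integrable (fun x => c x * f x) :=
  Integrable.bdd_mul hf hc.aestronglyMeasurable (c := 1) (ae_of_all _ fun x => (hn x).le)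

lemma chirp_conv (a b : ℝ) (hb : b ≠ 0) (φ ψ : ℝ → ℂ) (x : ℝ) :
    chI a b x * myconv φ ψ x =
      (Real.sqrt |b| : ℂ) *
        convA a b (fun y => chI a b y * φ y) (fun y => chI a b y * ψ y) x := by
  have hbC : (b : ℂ) ≠ 0 := Complex.ofReal_ne_zero.mpr hb
  have hsC : (Real.sqrt |b| : ℂ) ≠ 0 :=
    Complex.ofReal_ne_zero.mpr (ne_of_gt (Real.sqrt_pos.mpr (abs_pos.mpr hb)))
  rw [convA, ← mul_assoc]
  rw [show (Real.sqrt |b| : ℂ) * (1 / Real.sqrt |b|) = 1 by field_simp]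
  rw [one_mul]
  rw [show (∫ s : ℝ, (fun y => chI a b y * φ y) s *
      (Complex.exp (-2 * Real.pi * Complex.I * (a / b) * s * (x - s)) *
        ((fun y => chI a b y * ψ y) (x - s))))
      = ∫ s : ℝ, chI a b x * (φ s * ψ (x - s)) from ?_]
  · rw [MeasureTheory.integral_const_mul]; rfl
  congr 1; funext s
  simp only
  rw [show (fun y => chI a b y * φ y) s * (Complex.exp (-2 * Real.pi * Complex.I *
      (a / b) * s * (x - s)) * (chI a b (x - s) * ψ (x - s)))
      = (chI a b s * Complex.exp (-2 * Real.pi * Complex.I * (a / b) * s * (x - s)) *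
        chI a b (x - s)) * (φ s * ψ (x - s)) from by ring]
  congr 1
  rw [chI, chI, chI, ← Complex.exp_add, ← Complex.exp_add]
  congr 1
  push_cast
  field_simp
  ring


/-- Every nonzero continuous multiplicative linear functional on `(L¹(ℝ), ⋆_A)` is of the form
`f ↦ conj (η_A ω₀) * 𝓕_A f (ω₀)` for some `ω₀ ∈ ℝ`. -/
theorem multiplicative_functional_SAFT (a b c d p q : ℝ) (hb : b ≠ 0)
    (hA : a * d - b * c = 1) (h : (ℝ → ℂ) → ℂ)
    (hadd : ∀ f g : ℝ → ℂ, Integrable f → Integrable g → h (f + g) = h f + h g)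
    (hsmul : ∀ (z : ℂ) (f : ℝ → ℂ), Integrable f → h (z • f) = z * h f)
    (hcont : ∃ C : ℝ, ∀ f : ℝ → ℂ, Integrable f →
      ‖h f‖ ≤ C * (eLpNorm f 1 volume).toReal)
    (hmul : ∀ f g : ℝ → ℂ, Integrable f → Integrable g →
      h (convA a b f g) = h f * h g)
    (hne : ∃ f : ℝ → ℂ, Integrable f ∧ h f ≠ 0) :
    ∃ ω₀ : ℝ, ∀ f : ℝ → ℂ, Integrable f →
      h f = (starRingEnd ℂ) (etaA b d p q ω₀) * SAFT a b d p q f ω₀ := by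
  obtain ⟨C, hC⟩ := hcont
  have hbpos : 0 < |b| := abs_pos.mpr hb
  have hspos : 0 < Real.sqrt |b| := Real.sqrt_pos.mpr hbpos
  have hsC : (Real.sqrt |b| : ℂ) ≠ 0 := Complex.ofReal_ne_zero.mpr (ne_of_gt hspos)
  have hbC : (b : ℂ) ≠ 0 := Complex.ofReal_ne_zero.mpr hb
  have hπ : (Real.pi : ℂ) ≠ 0 := Complex.ofReal_ne_zero.mpr Real.pi_ne_zero
  set k : (ℝ → ℂ) → ℂ :=
    fun φ => (Real.sqrt |b| : ℂ) * h (fun x => chI a b x * φ x) with hk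
  have hII : ∀ {φ : ℝ → ℂ}, Integrable φ → Integrable (fun x => chI a b x * φ x) :=
    fun hφ => unit_mul_integrable (cont_chI a b) (norm_chI a b) hφ
  -- linearity of k
  have kadd : ∀ f g : ℝ → ℂ, Integrable f → Integrable g → k (f + g) = k f + k g := by
    intro f g hf hg
    rw [hk]; simp only
    rw [show (fun x => chI a b x * (f + g) x)
        = (fun x => chI a b x * f x) + fun x => chI a b x * g x from by
      funext x; simp only [Pi.add_apply]; ring]
    rw [hadd _ _ (hII hf) (hII hg)]; ring
  have ksmul : ∀ (z : ℂ) (f : ℝ → ℂ), Integrable f → k (z • f) = z * k f := by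
    intro z f hf
    rw [hk]; simp only
    rw [show (fun x => chI a b x * (z • f) x) = z • fun x => chI a b x * f x from by
      funext x; simp only [Pi.smul_apply, smul_eq_mul]; ring]
    rw [hsmul z _ (hII hf)]; ring
  have keLp : ∀ φ : ℝ → ℂ,
      eLpNorm (fun x => chI a b x * φ x) 1 volume = eLpNorm φ 1 volume := by
    intro φ
    rw [eLpNorm_one_eq_lintegral_enorm, eLpNorm_one_eq_lintegral_enorm]
    apply lintegral_congr
    intro x
    have h2 : ‖chI a b x‖₊ = 1 := NNReal.coe_injective (by simpa using norm_chI a b x)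
    rw [enorm_mul, enorm_eq_nnnorm (chI a b x), h2, ENNReal.coe_one, one_mul]
  have kbound : ∀ f : ℝ → ℂ, Integrable f →
      ‖k f‖ ≤ (Real.sqrt |b| * C) * (eLpNorm f 1 volume).toReal := by
    intro f hf
    rw [hk]; simp only
    rw [norm_mul, Complex.norm_real, Real.norm_eq_abs, abs_of_pos hspos]
    rw [mul_assoc]
    apply mul_le_mul_of_nonneg_left _ hspos.le
    calc ‖h fun x => chI a b x * f x‖
        ≤ C * (eLpNorm (fun x => chI a b x * f x) 1 volume).toReal := hC _ (hII hf)
      _ = C * (eLpNorm f 1 volume).toReal := by rw [keLp]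
  -- multiplicativity of k w.r.t. classical convolution
  have kmul : ∀ (φ ψ : ℝ → ℂ), Integrable φ → Integrable ψ →
      k (myconv φ ψ) = k φ * k ψ := by
    intro φ ψ hφ hψ
    have hchirp : (fun x => chI a b x * myconv φ ψ x)
        = (Real.sqrt |b| : ℂ) • convA a b (fun y => chI a b y * φ y)
            (fun y => chI a b y * ψ y) := by
      funext x
      exact chirp_conv a b hb φ ψ x
    have hconvI : Integrable (convA a b (fun y => chI a b y * φ y)
        (fun y => chI a b y * ψ y)) := by
      have h2 : convA a b (fun y => chI a b y * φ y) (fun y => chI a b y * ψ y)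
          = (Real.sqrt |b| : ℂ)⁻¹ • fun x => chI a b x * myconv φ ψ x := by
        rw [hchirp, ← smul_assoc, smul_eq_mul, inv_mul_cancel₀ hsC, one_smul]
      rw [h2]
      exact (hII (myconv_integrable hφ hψ)).smul _
    rw [hk]; simp only
    rw [hchirp]
    rw [show ((Real.sqrt |b| : ℂ) • convA a b (fun y => chI a b y * φ y)
        (fun y => chI a b y * ψ y)) = (Real.sqrt |b| : ℂ) • convA a b
        (fun y => chI a b y * φ y) (fun y => chI a b y * ψ y) from rfl]
    rw [hsmul _ _ hconvI, hmul _ _ (hII hφ) (hII hψ)]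
    ring
  -- nonvanishing
  obtain ⟨f₀, hf₀, hhf₀⟩ := hne
  have hchf : ∀ f : ℝ → ℂ, (fun x => chI a b x * ((fun y => chF a b y * f y) x)) = f := by
    intro f
    funext x
    simp only
    rw [← mul_assoc, chI_mul_chF, one_mul]
  have hkero : ∀ (f : ℝ → ℂ), k (fun y => chF a b y * f y)
      = (Real.sqrt |b| : ℂ) * h f := by
    intro f
    rw [hk]; simp only
    rw [hchf f]
  have hFint : Integrable (fun y => chF a b y * f₀ y) :=
    unit_mul_integrable (cont_chF a b) (norm_chF a b) hf₀
  -- build the CLM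
  obtain ⟨K, hK⟩ := exists_CLM kadd ksmul kbound
  have hKmul : ∀ (f g : ℝ → ℂ) (hf : Integrable f) (hg : Integrable g),
      K ((myconv_integrable hf hg).toL1 (myconv f g)) = K (hf.toL1 f) * K (hg.toL1 g) := by
    intro f g hf hg
    rw [hK _ (myconv_integrable hf hg), hK f hf, hK g hg]
    exact kmul f g hf hg
  have hKne : ∃ (u : ℝ → ℂ) (hu : Integrable u), K (hu.toL1 u) ≠ 0 := by
    refine ⟨_, hFint, ?_⟩
    rw [hK _ hFint, hkero]
    exact mul_ne_zero hsC hhf₀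
  obtain ⟨θ, hθ⟩ := L1_char_rep K hKmul hKne
  have hkrep : ∀ (f : ℝ → ℂ), Integrable f →
      k f = ∫ t : ℝ, f t * Complex.exp (θ * Complex.I * t) := by
    intro f hf
    rw [← hK f hf]
    exact hθ f hf
  -- conclusion
  refine ⟨p - θ * b / (2 * Real.pi), fun f hf => ?_⟩
  set ω : ℝ := p - θ * b / (2 * Real.pi) with hω
  have h1 : h f = (Real.sqrt |b| : ℂ)⁻¹ * k (fun y => chF a b y * f y) := by
    rw [hkero, ← mul_assoc, inv_mul_cancel₀ hsC, one_mul]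
  rw [h1, hkrep _ (unit_mul_integrable (cont_chF a b) (norm_chF a b) hf)]
  -- unfold RHS
  rw [SAFT, etaA]
  rw [show (starRingEnd ℂ) (Complex.exp ((Real.pi * Complex.I / b) *
      (d * ω ^ 2 + 2 * (b * q - d * p) * ω)))
      = Complex.exp (-((Real.pi * Complex.I / b) *
        (d * ω ^ 2 + 2 * (b * q - d * p) * ω))) from ?_]
  · rw [show ((1 : ℂ) / Real.sqrt |b|) = (Real.sqrt |b| : ℂ)⁻¹ from one_div _]
    rw [← mul_assoc, mul_comm (Complex.exp _) ((Real.sqrt |b| : ℂ)⁻¹), mul_assoc]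
    congr 1
    rw [← MeasureTheory.integral_const_mul]
    congr 1
    funext t
    have hcomb : ∀ (z u v : ℂ), Complex.exp u * z * Complex.exp v
        = z * Complex.exp (u + v) := by
      intro z u v; rw [Complex.exp_add]; ring
    have hcomb2 : ∀ (z u v : ℂ), Complex.exp u * (z * Complex.exp v)
        = z * Complex.exp (u + v) := by
      intro z u v; rw [Complex.exp_add]; ring
    show Complex.exp ((Real.pi * a * t ^ 2 / b : ℝ) * Complex.I) * f t *
        Complex.exp (θ * Complex.I * t) = _
    rw [hcomb, hcomb2]
    congr 2
    rw [hω]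
    push_cast
    have h2 : ((2:ℂ) * Real.pi) ≠ 0 := by
      simp [hπ]
    field_simp [hbC, hπ]
    ring_nf
  · rw [← Complex.exp_conj]
    congr 1
    simp only [map_mul, map_div₀, map_add, map_sub, map_pow, Complex.conj_I,
      Complex.conj_ofReal, map_ofNat]
    ring
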